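/- Let f be an element of the free group F_X whose reduced word begins with the letter x_m^{-1} (negative sign), and let σ be τ_k or τ_k^{-1} for some k ≥ 1. Then the reduced word of σ(f) begins with x_m^{-1}, x_{m+1}^{-1}, or x_{m−1}^{-1}. -/

import Mathlib

namespace TauAux

open FreeGroup

/-- Two adjacent letters do not cancel. -/
def ncond (a b : ℕ × Bool) : Prop := ¬(a.1 = b.1 ∧ a.2 = !b.2)

theorem chain'_reduce : ∀ w : List (ℕ × Bool), List.Chain' ncond (FreeGroup.reduce w)
  | [] => by simp [List.Chain']
  | a :: t => by
    have ih := chain'_reduce t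
    rw [FreeGroup.reduce.cons]
    cases h : FreeGroup.reduce t with
    | nil => simp [List.Chain']
    | cons b u =>
      rw [h] at ih
      dsimp only
      split_ifs with hc
      · exact ih.tail
      · exact List.isChain_cons_cons.mpr ⟨hc, ih⟩

theorem reduce_eq_self : ∀ w : List (ℕ × Bool), List.Chain' ncond w → FreeGroup.reduce w = w
  | [], _ => rfl
  | [a], _ => rfl
  | a :: b :: t, h => by
    have ih := reduce_eq_self (b :: t) h.tail
    rw [FreeGroup.reduce.cons, ih]
    dsimp only
    rw [if_neg (List.isChain_cons_cons.mp h).1]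


variable (k p q : ℕ)

/-- The image word of a single letter. -/
def Blk : ℕ × Bool → List (ℕ × Bool)
  | (j, b) =>
    if j = k then
      (if b then [(p, true), (k, false), (q, true)] else [(q, false), (k, true), (p, false)])
    else [(j, b)]

/-- Whether the blocks of two adjacent (reduced) letters cancel at their junction. -/
def canc (a b : ℕ × Bool) : Bool :=
  decide ((a = (k, true) ∧ b = (q, false)) ∨ (a = (k, false) ∧ b = (p, true)) ∨
    (a = (p, false) ∧ b = (k, true)) ∨ (a = (q, true) ∧ b = (k, false)))

def cancO (a : ℕ × Bool) : List (ℕ × Bool) → Bool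
  | [] => false
  | b :: _ => canc k p q a b

/-- The reduced image word: concatenation of blocks, trimmed at cancelling junctions.
The flag records whether the first letter of the current block must be dropped. -/
def Rgo : Bool → List (ℕ × Bool) → List (ℕ × Bool)
  | _, [] => []
  | lt, a :: rest =>
    (if cancO k p q a rest then (if lt then (Blk k p q a).tail else Blk k p q a).dropLast
     else (if lt then (Blk k p q a).tail else Blk k p q a)) ++ Rgo (cancO k p q a rest) rest

/-- Expected head of the reduced image word. -/
def expH : Bool → List (ℕ × Bool) → Option (ℕ × Bool)
  | _, [] => none
  | true, (j, b) :: t => if j = k then some (k, !b) else expH false t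
  | false, (j, b) :: t =>
    if j = k then some (if b then (p, true) else (q, false))
    else if j = p ∧ b = false ∧ t.head? = some (k, true) then some (k, false)
    else if j = q ∧ b = true ∧ t.head? = some (k, false) then some (k, true)
    else some (j, b)

def valid (lt : Bool) (w : List (ℕ × Bool)) : Prop :=
  lt = true → ∃ j b t, w = (j, b) :: t ∧ (j = k ∨ (j, b) = (q, false) ∨ (j, b) = (p, true))


theorem ncond_fst {x : ℕ} {s : Bool} {y : ℕ × Bool} (h : x ≠ y.1) : ncond (x, s) y :=
  fun hcon => h hcon.1

theorem ncond_snd {x : ℕ} {s : Bool} {y : ℕ × Bool} (h : s = y.2) : ncond (x, s) y := by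
  intro hcon
  rw [h] at hcon
  rcases hcon with ⟨-, h2⟩
  cases hy : y.2 <;> rw [hy] at h2 <;> simp at h2

theorem ncond_pair {x : ℕ} {s : Bool} {y : ℕ × Bool} (h : y ≠ (x, !s)) : ncond (x, s) y := by
  intro hcon
  apply h
  obtain ⟨y1, y2⟩ := y
  obtain ⟨h1, h2⟩ := hcon
  simp only [Prod.mk.injEq]
  refine ⟨h1.symm, ?_⟩
  cases y2 <;> simp_all

theorem Rgo_nil (lt : Bool) : Rgo k p q lt [] = [] := by cases lt <;> rfl

theorem Rgo_cons (lt : Bool) (a : ℕ × Bool) (rest : List (ℕ × Bool)) :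
    Rgo k p q lt (a :: rest) =
      (if cancO k p q a rest then (if lt then (Blk k p q a).tail else Blk k p q a).dropLast
       else (if lt then (Blk k p q a).tail else Blk k p q a)) ++
        Rgo k p q (cancO k p q a rest) rest := by
  cases lt <;> rfl

theorem cancO_nil (a : ℕ × Bool) : cancO k p q a [] = false := rfl

theorem cancO_cons (a b : ℕ × Bool) (t : List (ℕ × Bool)) :
    cancO k p q a (b :: t) = canc k p q a b := rfl

theorem expH_nil (lt : Bool) : expH k p q lt [] = none := by cases lt <;> rfl

theorem expH_true_cons (j : ℕ) (b : Bool) (t : List (ℕ × Bool)) :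
    expH k p q true ((j, b) :: t) = if j = k then some (k, !b) else expH k p q false t := rfl

theorem expH_false_cons (j : ℕ) (b : Bool) (t : List (ℕ × Bool)) :
    expH k p q false ((j, b) :: t) =
      (if j = k then some (if b then (p, true) else (q, false))
       else if j = p ∧ b = false ∧ t.head? = some (k, true) then some (k, false)
       else if j = q ∧ b = true ∧ t.head? = some (k, false) then some (k, true)
       else some (j, b)) := rfl

theorem Blk_kt : Blk k p q (k, true) = [(p, true), (k, false), (q, true)] := by simp [Blk]

theorem Blk_kf : Blk k p q (k, false) = [(q, false), (k, true), (p, false)] := by simp [Blk]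

theorem Blk_s {j : ℕ} (hj : j ≠ k) (b : Bool) : Blk k p q (j, b) = [(j, b)] := by simp [Blk, hj]


theorem canc_kt_iff (hq : q ≠ k) (x : ℕ × Bool) :
    canc k p q (k, true) x = true ↔ x = (q, false) := by
  simp [canc, Prod.mk.injEq, Ne.symm hq]

theorem canc_kf_iff (hp : p ≠ k) (x : ℕ × Bool) :
    canc k p q (k, false) x = true ↔ x = (p, true) := by
  simp [canc, Prod.mk.injEq, Ne.symm hp]

theorem canc_s_iff {j : ℕ} (hj : j ≠ k) (b : Bool) (x : ℕ × Bool) :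
    canc k p q (j, b) x = true ↔
      ((j, b) = (p, false) ∧ x = (k, true)) ∨ ((j, b) = (q, true) ∧ x = (k, false)) := by
  simp [canc, Prod.mk.injEq, hj]

theorem expH_false_cases {t0 : List (ℕ × Bool)} {y : ℕ × Bool}
    (h : expH k p q false t0 = some y) :
    ∃ d t', t0 = d :: t' ∧
      ((d.1 = k ∧ d.2 = true ∧ y = (p, true)) ∨
       (d.1 = k ∧ d.2 = false ∧ y = (q, false)) ∨
       (d = (p, false) ∧ y = (k, false)) ∨
       (d = (q, true) ∧ y = (k, true)) ∨
       (d.1 ≠ k ∧ y = d)) := by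
  cases t0 with
  | nil => rw [expH_nil] at h; simp at h
  | cons d t' =>
    obtain ⟨j0, b0⟩ := d
    refine ⟨(j0, b0), t', rfl, ?_⟩
    rw [expH_false_cons] at h
    by_cases h0 : j0 = k
    · rw [if_pos h0] at h
      cases hb0 : b0
      · rw [hb0] at h
        exact Or.inr (Or.inl ⟨h0, rfl, (Option.some.inj h).symm⟩)
      · rw [hb0] at h
        exact Or.inl ⟨h0, rfl, (Option.some.inj h).symm⟩
    · rw [if_neg h0] at h
      split_ifs at h with h1 h2
      · exact Or.inr (Or.inr (Or.inl ⟨by rw [h1.1, h1.2.1], (Option.some.inj h).symm⟩))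
      · exact Or.inr (Or.inr (Or.inr (Or.inl ⟨by rw [h2.1, h2.2.1], (Option.some.inj h).symm⟩)))
      · exact Or.inr (Or.inr (Or.inr (Or.inr ⟨h0, (Option.some.inj h).symm⟩)))


theorem mk_single_true (x : ℕ) : FreeGroup.mk [(x, true)] = FreeGroup.of x := rfl

theorem mk_single_false (x : ℕ) : FreeGroup.mk [(x, false)] = (FreeGroup.of x)⁻¹ := by
  rw [← mk_single_true, FreeGroup.inv_mk]
  simp [FreeGroup.invRev]

theorem mk_single (x : ℕ) (s : Bool) :
    FreeGroup.mk [(x, s)] = (FreeGroup.of x) ^ (if s then (1 : ℤ) else -1) := by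
  cases s <;> simp [mk_single_true, mk_single_false]

theorem mk_pair (x : ℕ) (s : Bool) :
    FreeGroup.mk [(x, s)] * FreeGroup.mk [(x, !s)] = 1 := by
  cases s <;> simp [mk_single_true, mk_single_false]

theorem mk_trick_tf (X T : List (ℕ × Bool)) (x : ℕ) :
    FreeGroup.mk (X ++ (x, true) :: (x, false) :: T) = FreeGroup.mk (X ++ T) := by
  have e1 : X ++ (x, true) :: (x, false) :: T = X ++ ([(x, true)] ++ ([(x, false)] ++ T)) := by simp
  rw [e1, ← FreeGroup.mul_mk, ← FreeGroup.mul_mk, ← FreeGroup.mul_mk, mk_single_true,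
    mk_single_false, mul_inv_cancel_left, FreeGroup.mul_mk]

theorem mk_trick_ft (X T : List (ℕ × Bool)) (x : ℕ) :
    FreeGroup.mk (X ++ (x, false) :: (x, true) :: T) = FreeGroup.mk (X ++ T) := by
  have e1 : X ++ (x, false) :: (x, true) :: T = X ++ ([(x, false)] ++ ([(x, true)] ++ T)) := by simp
  rw [e1, ← FreeGroup.mul_mk, ← FreeGroup.mul_mk, ← FreeGroup.mul_mk, mk_single_true,
    mk_single_false, inv_mul_cancel_left, FreeGroup.mul_mk]


theorem main (hp : p ≠ k) (hq : q ≠ k) (hpq : p ≠ q) :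
    ∀ w : List (ℕ × Bool), List.Chain' ncond w → ∀ lt : Bool, valid k p q lt w →
      List.Chain' ncond (Rgo k p q lt w) ∧
      (Rgo k p q lt w).head? = expH k p q lt w ∧
      FreeGroup.mk (Rgo k p q lt w) =
        FreeGroup.mk (if lt then (w.flatMap (Blk k p q)).tail else w.flatMap (Blk k p q)) := by
  intro w
  induction w with
  | nil =>
    intro _ lt _
    refine ⟨by rw [Rgo_nil]; simp [List.Chain'], by rw [Rgo_nil, expH_nil]; rfl, by cases lt <;> simp [Rgo_nil]⟩
  | cons a rest ih =>
    intro hch lt hvalid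
    obtain ⟨j, b⟩ := a
    by_cases hj : j = k
    · rw [hj] at hch ⊢
      cases b
      · -- letter (k, false), block [(q,F),(k,T),(p,F)]
        cases rest with
        | nil =>
          cases lt
          · have hR : Rgo k p q false [(k, false)] = [(q, false), (k, true), (p, false)] := by
              rw [Rgo_cons, cancO_nil, Blk_kf, Rgo_nil]; simp
            refine ⟨?_, ?_, ?_⟩
            · rw [hR]
              exact List.isChain_cons_cons.mpr ⟨ncond_fst hq,
                List.isChain_cons_cons.mpr ⟨ncond_fst (Ne.symm hp), List.isChain_singleton _⟩⟩
            · rw [hR, expH_false_cons, if_pos rfl]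
              rfl
            · rw [hR, if_neg Bool.false_ne_true]; simp [Blk_kf]
          · have hR : Rgo k p q true [(k, false)] = [(k, true), (p, false)] := by
              rw [Rgo_cons, cancO_nil, Blk_kf, Rgo_nil]; simp
            refine ⟨?_, ?_, ?_⟩
            · rw [hR]
              exact List.isChain_cons_cons.mpr ⟨ncond_fst (Ne.symm hp), List.isChain_singleton _⟩
            · rw [hR, expH_true_cons, if_pos rfl]
              rfl
            · rw [hR, if_pos rfl]; simp [Blk_kf]
        | cons x t =>
          obtain ⟨j', bb⟩ := x
          have hab : ncond (k, false) (j', bb) := (List.isChain_cons_cons.mp hch).1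
          by_cases hb' : (j', bb) = (p, true)
          · -- case C2 : cancellation
            rw [hb'] at ih hch ⊢
            have hc : cancO k p q (k, false) ((p, true) :: t) = true := by
              rw [cancO_cons]; exact (canc_kf_iff _ _ _ hp _).mpr rfl
            obtain ⟨C2, H2, M2⟩ := ih hch.tail true
              (fun _ => ⟨p, true, t, rfl, Or.inr (Or.inr rfl)⟩)
            have M2' : FreeGroup.mk (Rgo k p q true ((p, true) :: t)) =
                FreeGroup.mk ((((p, true) :: t).flatMap (Blk k p q)).tail) := by simpa using M2
            have hjun : ∀ y, expH k p q true ((p, true) :: t) = some y → ncond (k, true) y := by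
              intro y hy
              rw [expH_true_cons, if_neg hp] at hy
              obtain ⟨d, t', heq, hcase⟩ := expH_false_cases k p q hy
              subst heq
              have hdt : ncond (p, true) d := (List.isChain_cons_cons.mp hch.tail).1
              rcases hcase with ⟨hdk, hdb, rfl⟩ | ⟨hdk, hdb, rfl⟩ | ⟨hdeq, rfl⟩ |
                ⟨hdeq, rfl⟩ | ⟨hdk, rfl⟩
              · exact ncond_snd rfl
              · exact ncond_fst (Ne.symm hq)
              · exact absurd ⟨by rw [hdeq], by rw [hdeq]; rfl⟩ hdt
              · exact ncond_snd rfl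
              · exact ncond_fst (Ne.symm hdk)
            cases lt
            · have hR : Rgo k p q false ((k, false) :: (p, true) :: t) =
                  [(q, false), (k, true)] ++ Rgo k p q true ((p, true) :: t) := by
                rw [Rgo_cons, hc, Blk_kf]; simp
              refine ⟨?_, ?_, ?_⟩
              · rw [hR]
                refine List.isChain_append.mpr ⟨?_, C2, ?_⟩
                · exact List.isChain_cons_cons.mpr ⟨ncond_fst hq, List.isChain_singleton _⟩
                · intro x hx y hy
                  simp at hx
                  subst hx
                  rw [Option.mem_def, H2] at hy
                  exact hjun y hy
              · rw [hR]
                simp only [List.cons_append, List.head?_cons]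
                rw [expH_false_cons, if_pos rfl]
                rfl
              · rw [hR, ← FreeGroup.mul_mk, M2', FreeGroup.mul_mk, if_neg Bool.false_ne_true]
                simp only [List.flatMap_cons, Blk_kf, Blk_s k p q hp, List.cons_append,
                  List.singleton_append, List.nil_append, List.tail_cons]
                rw [show ((q,false)::(k,true)::(p,false)::(p,true)::List.flatMap (Blk k p q) t :
                    List (ℕ × Bool)) =
                    [(q,false),(k,true)] ++ (p,false)::(p,true)::List.flatMap (Blk k p q) t
                    from rfl, mk_trick_ft]
                simp
            · have hR : Rgo k p q true ((k, false) :: (p, true) :: t) =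
                  [(k, true)] ++ Rgo k p q true ((p, true) :: t) := by
                rw [Rgo_cons, hc, Blk_kf]; simp
              refine ⟨?_, ?_, ?_⟩
              · rw [hR]
                refine List.isChain_append.mpr ⟨List.isChain_singleton _, C2, ?_⟩
                · intro x hx y hy
                  simp at hx
                  subst hx
                  rw [Option.mem_def, H2] at hy
                  exact hjun y hy
              · rw [hR]
                simp only [List.cons_append, List.head?_cons, List.singleton_append]
                rw [expH_true_cons, if_pos rfl]
                rfl
              · rw [hR, ← FreeGroup.mul_mk, M2', FreeGroup.mul_mk, if_pos rfl]
                simp only [List.flatMap_cons, Blk_kf, Blk_s k p q hp, List.cons_append,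
                  List.singleton_append, List.nil_append, List.tail_cons]
                rw [show ((k,true)::(p,false)::(p,true)::List.flatMap (Blk k p q) t :
                    List (ℕ × Bool)) =
                    [(k,true)] ++ (p,false)::(p,true)::List.flatMap (Blk k p q) t
                    from rfl, mk_trick_ft]
                simp
          · -- case B : no cancellation
            have hc : cancO k p q (k, false) ((j', bb) :: t) = false := by
              rw [cancO_cons, Bool.eq_false_iff]
              intro hcx
              exact hb' ((canc_kf_iff _ _ _ hp _).mp hcx)
            obtain ⟨C2, H2, M2⟩ := ih hch.tail false (fun hf => absurd hf Bool.false_ne_true)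
            have M2' : FreeGroup.mk (Rgo k p q false ((j', bb) :: t)) =
                FreeGroup.mk (((j', bb) :: t).flatMap (Blk k p q)) := by simpa using M2
            have hjun : ∀ y, expH k p q false ((j', bb) :: t) = some y →
                ncond (p, false) y := by
              intro y hy
              obtain ⟨d, t', heq, hcase⟩ := expH_false_cases k p q hy
              injection heq with h1 h2
              subst h2
              subst h1
              rcases hcase with ⟨hdk, hdb, rfl⟩ | ⟨hdk, hdb, rfl⟩ | ⟨hdeq, rfl⟩ |
                ⟨hdeq, rfl⟩ | ⟨hdk, rfl⟩
              · exact absurd ⟨hdk.symm, by rw [hdb]; rfl⟩ hab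
              · exact ncond_snd rfl
              · exact ncond_snd rfl
              · exact ncond_fst hp
              · by_cases hjp : j' = p
                · refine ncond_snd ?_
                  cases bb
                  · rfl
                  · exact absurd (show (j', true) = (p, true) by rw [hjp]) hb'
                · exact ncond_fst (Ne.symm hjp)
            cases lt
            · have hR : Rgo k p q false ((k, false) :: (j', bb) :: t) =
                  [(q, false), (k, true), (p, false)] ++ Rgo k p q false ((j', bb) :: t) := by
                rw [Rgo_cons, hc, Blk_kf]; simp
              refine ⟨?_, ?_, ?_⟩
              · rw [hR]
                refine List.isChain_append.mpr ⟨?_, C2, ?_⟩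
                · exact List.isChain_cons_cons.mpr ⟨ncond_fst hq,
                    List.isChain_cons_cons.mpr ⟨ncond_fst (Ne.symm hp), List.isChain_singleton _⟩⟩
                · intro x hx y hy
                  simp at hx
                  subst hx
                  rw [Option.mem_def, H2] at hy
                  exact hjun y hy
              · rw [hR]
                simp only [List.cons_append, List.head?_cons]
                rw [expH_false_cons, if_pos rfl]
                rfl
              · rw [hR, ← FreeGroup.mul_mk, M2', FreeGroup.mul_mk, if_neg Bool.false_ne_true]
                simp [List.flatMap_cons, Blk_kf]
            · have hR : Rgo k p q true ((k, false) :: (j', bb) :: t) =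
                  [(k, true), (p, false)] ++ Rgo k p q false ((j', bb) :: t) := by
                rw [Rgo_cons, hc, Blk_kf]; simp
              refine ⟨?_, ?_, ?_⟩
              · rw [hR]
                refine List.isChain_append.mpr ⟨?_, C2, ?_⟩
                · exact List.isChain_cons_cons.mpr ⟨ncond_fst (Ne.symm hp), List.isChain_singleton _⟩
                · intro x hx y hy
                  simp at hx
                  subst hx
                  rw [Option.mem_def, H2] at hy
                  exact hjun y hy
              · rw [hR]
                simp only [List.cons_append, List.head?_cons]
                rw [expH_true_cons, if_pos rfl]
                rfl
              · rw [hR, ← FreeGroup.mul_mk, M2', FreeGroup.mul_mk, if_pos rfl]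
                simp [List.flatMap_cons, Blk_kf]
      · -- letter (k, true), block [(p,T),(k,F),(q,T)]
        cases rest with
        | nil =>
          cases lt
          · have hR : Rgo k p q false [(k, true)] = [(p, true), (k, false), (q, true)] := by
              rw [Rgo_cons, cancO_nil, Blk_kt, Rgo_nil]; simp
            refine ⟨?_, ?_, ?_⟩
            · rw [hR]
              exact List.isChain_cons_cons.mpr ⟨ncond_fst hp,
                List.isChain_cons_cons.mpr ⟨ncond_fst (Ne.symm hq), List.isChain_singleton _⟩⟩
            · rw [hR, expH_false_cons, if_pos rfl]
              rfl
            · rw [hR, if_neg Bool.false_ne_true]; simp [Blk_kt]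
          · have hR : Rgo k p q true [(k, true)] = [(k, false), (q, true)] := by
              rw [Rgo_cons, cancO_nil, Blk_kt, Rgo_nil]; simp
            refine ⟨?_, ?_, ?_⟩
            · rw [hR]
              exact List.isChain_cons_cons.mpr ⟨ncond_fst (Ne.symm hq), List.isChain_singleton _⟩
            · rw [hR, expH_true_cons, if_pos rfl]
              rfl
            · rw [hR, if_pos rfl]; simp [Blk_kt]
        | cons x t =>
          obtain ⟨j', bb⟩ := x
          have hab : ncond (k, true) (j', bb) := (List.isChain_cons_cons.mp hch).1
          by_cases hb' : (j', bb) = (q, false)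
          · -- case C1 : cancellation
            rw [hb'] at ih hch ⊢
            have hc : cancO k p q (k, true) ((q, false) :: t) = true := by
              rw [cancO_cons]; exact (canc_kt_iff _ _ _ hq _).mpr rfl
            obtain ⟨C2, H2, M2⟩ := ih hch.tail true
              (fun _ => ⟨q, false, t, rfl, Or.inr (Or.inl rfl)⟩)
            have M2' : FreeGroup.mk (Rgo k p q true ((q, false) :: t)) =
                FreeGroup.mk ((((q, false) :: t).flatMap (Blk k p q)).tail) := by simpa using M2
            have hjun : ∀ y, expH k p q true ((q, false) :: t) = some y →
                ncond (k, false) y := by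
              intro y hy
              rw [expH_true_cons, if_neg hq] at hy
              obtain ⟨d, t', heq, hcase⟩ := expH_false_cases k p q hy
              subst heq
              have hdt : ncond (q, false) d := (List.isChain_cons_cons.mp hch.tail).1
              rcases hcase with ⟨hdk, hdb, rfl⟩ | ⟨hdk, hdb, rfl⟩ | ⟨hdeq, rfl⟩ |
                ⟨hdeq, rfl⟩ | ⟨hdk, rfl⟩
              · exact ncond_fst (Ne.symm hp)
              · exact ncond_snd rfl
              · exact ncond_snd rfl
              · exact absurd ⟨by rw [hdeq], by rw [hdeq]; rfl⟩ hdt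
              · exact ncond_fst (Ne.symm hdk)
            cases lt
            · have hR : Rgo k p q false ((k, true) :: (q, false) :: t) =
                  [(p, true), (k, false)] ++ Rgo k p q true ((q, false) :: t) := by
                rw [Rgo_cons, hc, Blk_kt]; simp
              refine ⟨?_, ?_, ?_⟩
              · rw [hR]
                refine List.isChain_append.mpr ⟨?_, C2, ?_⟩
                · exact List.isChain_cons_cons.mpr ⟨ncond_fst hp, List.isChain_singleton _⟩
                · intro x hx y hy
                  simp at hx
                  subst hx
                  rw [Option.mem_def, H2] at hy
                  exact hjun y hy
              · rw [hR]
                simp only [List.cons_append, List.head?_cons]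
                rw [expH_false_cons, if_pos rfl]
                rfl
              · rw [hR, ← FreeGroup.mul_mk, M2', FreeGroup.mul_mk, if_neg Bool.false_ne_true]
                simp only [List.flatMap_cons, Blk_kt, Blk_s k p q hq, List.cons_append,
                  List.singleton_append, List.nil_append, List.tail_cons]
                rw [show ((p,true)::(k,false)::(q,true)::(q,false)::List.flatMap (Blk k p q) t :
                    List (ℕ × Bool)) =
                    [(p,true),(k,false)] ++ (q,true)::(q,false)::List.flatMap (Blk k p q) t
                    from rfl, mk_trick_tf]
                simp
            · have hR : Rgo k p q true ((k, true) :: (q, false) :: t) =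
                  [(k, false)] ++ Rgo k p q true ((q, false) :: t) := by
                rw [Rgo_cons, hc, Blk_kt]; simp
              refine ⟨?_, ?_, ?_⟩
              · rw [hR]
                refine List.isChain_append.mpr ⟨List.isChain_singleton _, C2, ?_⟩
                · intro x hx y hy
                  simp at hx
                  subst hx
                  rw [Option.mem_def, H2] at hy
                  exact hjun y hy
              · rw [hR]
                simp only [List.cons_append, List.head?_cons, List.singleton_append]
                rw [expH_true_cons, if_pos rfl]
                rfl
              · rw [hR, ← FreeGroup.mul_mk, M2', FreeGroup.mul_mk, if_pos rfl]
                simp only [List.flatMap_cons, Blk_kt, Blk_s k p q hq, List.cons_append,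
                  List.singleton_append, List.nil_append, List.tail_cons]
                rw [show ((k,false)::(q,true)::(q,false)::List.flatMap (Blk k p q) t :
                    List (ℕ × Bool)) =
                    [(k,false)] ++ (q,true)::(q,false)::List.flatMap (Blk k p q) t
                    from rfl, mk_trick_tf]
                simp
          · -- case A : no cancellation
            have hc : cancO k p q (k, true) ((j', bb) :: t) = false := by
              rw [cancO_cons, Bool.eq_false_iff]
              intro hcx
              exact hb' ((canc_kt_iff _ _ _ hq _).mp hcx)
            obtain ⟨C2, H2, M2⟩ := ih hch.tail false (fun hf => absurd hf Bool.false_ne_true)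
            have M2' : FreeGroup.mk (Rgo k p q false ((j', bb) :: t)) =
                FreeGroup.mk (((j', bb) :: t).flatMap (Blk k p q)) := by simpa using M2
            have hjun : ∀ y, expH k p q false ((j', bb) :: t) = some y →
                ncond (q, true) y := by
              intro y hy
              obtain ⟨d, t', heq, hcase⟩ := expH_false_cases k p q hy
              injection heq with h1 h2
              subst h2
              subst h1
              rcases hcase with ⟨hdk, hdb, rfl⟩ | ⟨hdk, hdb, rfl⟩ | ⟨hdeq, rfl⟩ |
                ⟨hdeq, rfl⟩ | ⟨hdk, rfl⟩
              · exact ncond_fst (Ne.symm hpq)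
              · exact absurd ⟨hdk.symm, by rw [hdb]; rfl⟩ hab
              · exact ncond_fst hq
              · exact ncond_snd rfl
              · by_cases hjq : j' = q
                · refine ncond_snd ?_
                  cases bb
                  · exact absurd (show (j', false) = (q, false) by rw [hjq]) hb'
                  · rfl
                · exact ncond_fst (Ne.symm hjq)
            cases lt
            · have hR : Rgo k p q false ((k, true) :: (j', bb) :: t) =
                  [(p, true), (k, false), (q, true)] ++ Rgo k p q false ((j', bb) :: t) := by
                rw [Rgo_cons, hc, Blk_kt]; simp
              refine ⟨?_, ?_, ?_⟩
              · rw [hR]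
                refine List.isChain_append.mpr ⟨?_, C2, ?_⟩
                · exact List.isChain_cons_cons.mpr ⟨ncond_fst hp,
                    List.isChain_cons_cons.mpr ⟨ncond_fst (Ne.symm hq), List.isChain_singleton _⟩⟩
                · intro x hx y hy
                  simp at hx
                  subst hx
                  rw [Option.mem_def, H2] at hy
                  exact hjun y hy
              · rw [hR]
                simp only [List.cons_append, List.head?_cons]
                rw [expH_false_cons, if_pos rfl]
                rfl
              · rw [hR, ← FreeGroup.mul_mk, M2', FreeGroup.mul_mk, if_neg Bool.false_ne_true]
                simp [List.flatMap_cons, Blk_kt]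
            · have hR : Rgo k p q true ((k, true) :: (j', bb) :: t) =
                  [(k, false), (q, true)] ++ Rgo k p q false ((j', bb) :: t) := by
                rw [Rgo_cons, hc, Blk_kt]; simp
              refine ⟨?_, ?_, ?_⟩
              · rw [hR]
                refine List.isChain_append.mpr ⟨?_, C2, ?_⟩
                · exact List.isChain_cons_cons.mpr ⟨ncond_fst (Ne.symm hq), List.isChain_singleton _⟩
                · intro x hx y hy
                  simp at hx
                  subst hx
                  rw [Option.mem_def, H2] at hy
                  exact hjun y hy
              · rw [hR]
                simp only [List.cons_append, List.head?_cons]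
                rw [expH_true_cons, if_pos rfl]
                rfl
              · rw [hR, ← FreeGroup.mul_mk, M2', FreeGroup.mul_mk, if_pos rfl]
                simp [List.flatMap_cons, Blk_kt]
    · -- letter (j, b) with j ≠ k
      cases lt
      · -- lt = false
        cases rest with
        | nil =>
          have hR : Rgo k p q false [(j, b)] = [(j, b)] := by
            rw [Rgo_cons, cancO_nil, Blk_s k p q hj, Rgo_nil]; simp
          refine ⟨?_, ?_, ?_⟩
          · rw [hR]; exact List.isChain_singleton _
          · rw [hR, expH_false_cons, if_neg hj]
            simp
          · rw [hR, if_neg Bool.false_ne_true]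
            simp [Blk_s k p q hj]
        | cons x t =>
          obtain ⟨j', bb⟩ := x
          have hab : ncond (j, b) (j', bb) := (List.isChain_cons_cons.mp hch).1
          by_cases hcc : ((j, b) = (p, false) ∧ (j', bb) = (k, true)) ∨
              ((j, b) = (q, true) ∧ (j', bb) = (k, false))
          · have hc : cancO k p q (j, b) ((j', bb) :: t) = true := by
              rw [cancO_cons]; exact (canc_s_iff _ _ _ hj _ _).mpr hcc
            rcases hcc with ⟨ha, hb2⟩ | ⟨ha, hb2⟩
            · -- case C3 : (p,false) before (k,true)
              rw [ha, hb2] at hch hc ⊢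
              rw [hb2] at ih
              obtain ⟨C2, H2, M2⟩ := ih hch.tail true (fun _ => ⟨k, true, t, rfl, Or.inl rfl⟩)
              have M2' : FreeGroup.mk (Rgo k p q true ((k, true) :: t)) =
                  FreeGroup.mk ((((k, true) :: t).flatMap (Blk k p q)).tail) := by simpa using M2
              have hR : Rgo k p q false ((p, false) :: (k, true) :: t) =
                  Rgo k p q true ((k, true) :: t) := by
                rw [Rgo_cons, hc, Blk_s k p q hp]; simp
              refine ⟨by rw [hR]; exact C2, ?_, ?_⟩
              · rw [hR, H2, expH_true_cons, if_pos rfl, expH_false_cons, if_neg hp,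
                  if_pos ⟨rfl, rfl, rfl⟩]
                rfl
              · rw [hR, M2', if_neg Bool.false_ne_true]
                simp only [List.flatMap_cons, Blk_kt, Blk_s k p q hp, List.cons_append,
                  List.singleton_append, List.nil_append, List.tail_cons]
                rw [show ((p,false)::(p,true)::(k,false)::(q,true)::List.flatMap (Blk k p q) t :
                    List (ℕ × Bool)) =
                    ([] : List (ℕ × Bool)) ++
                      (p,false)::(p,true)::((k,false)::(q,true)::List.flatMap (Blk k p q) t)
                    from rfl, mk_trick_ft]
                simp
            · -- case C4 : (q,true) before (k,false)
              rw [ha, hb2] at hch hc ⊢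
              rw [hb2] at ih
              obtain ⟨C2, H2, M2⟩ := ih hch.tail true (fun _ => ⟨k, false, t, rfl, Or.inl rfl⟩)
              have M2' : FreeGroup.mk (Rgo k p q true ((k, false) :: t)) =
                  FreeGroup.mk ((((k, false) :: t).flatMap (Blk k p q)).tail) := by simpa using M2
              have hR : Rgo k p q false ((q, true) :: (k, false) :: t) =
                  Rgo k p q true ((k, false) :: t) := by
                rw [Rgo_cons, hc, Blk_s k p q hq]; simp
              refine ⟨by rw [hR]; exact C2, ?_, ?_⟩
              · rw [hR, H2, expH_true_cons, if_pos rfl, expH_false_cons, if_neg hq,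
                  if_neg (by simp), if_pos ⟨rfl, rfl, rfl⟩]
                rfl
              · rw [hR, M2', if_neg Bool.false_ne_true]
                simp only [List.flatMap_cons, Blk_kf, Blk_s k p q hq, List.cons_append,
                  List.singleton_append, List.nil_append, List.tail_cons]
                rw [show ((q,true)::(q,false)::(k,true)::(p,false)::List.flatMap (Blk k p q) t :
                    List (ℕ × Bool)) =
                    ([] : List (ℕ × Bool)) ++
                      (q,true)::(q,false)::((k,true)::(p,false)::List.flatMap (Blk k p q) t)
                    from rfl, mk_trick_tf]
                simp
          · -- case S : no cancellation
            have hc : cancO k p q (j, b) ((j', bb) :: t) = false := by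
              rw [cancO_cons, Bool.eq_false_iff]
              intro hcx
              exact hcc ((canc_s_iff _ _ _ hj _ _).mp hcx)
            obtain ⟨C2, H2, M2⟩ := ih hch.tail false (fun hf => absurd hf Bool.false_ne_true)
            have M2' : FreeGroup.mk (Rgo k p q false ((j', bb) :: t)) =
                FreeGroup.mk (((j', bb) :: t).flatMap (Blk k p q)) := by simpa using M2
            have hjun : ∀ y, expH k p q false ((j', bb) :: t) = some y → ncond (j, b) y := by
              intro y hy
              obtain ⟨d, t', heq, hcase⟩ := expH_false_cases k p q hy
              injection heq with h1 h2
              subst h2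
              subst h1
              rcases hcase with ⟨hdk, hdb, rfl⟩ | ⟨hdk, hdb, rfl⟩ | ⟨hdeq, rfl⟩ |
                ⟨hdeq, rfl⟩ | ⟨hdk, rfl⟩
              · by_cases hjp : j = p
                · cases b
                  · exact absurd (Or.inl ⟨show (j, false) = (p, false) by rw [hjp], Prod.ext_iff.mpr ⟨hdk, hdb⟩⟩) hcc
                  · exact ncond_snd rfl
                · exact ncond_fst hjp
              · by_cases hjq : j = q
                · cases b
                  · exact ncond_snd rfl
                  · exact absurd (Or.inr ⟨show (j, true) = (q, true) by rw [hjq], Prod.ext_iff.mpr ⟨hdk, hdb⟩⟩) hcc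
                · exact ncond_fst hjq
              · exact ncond_fst hj
              · exact ncond_fst hj
              · exact hab
            have hR : Rgo k p q false ((j, b) :: (j', bb) :: t) =
                [(j, b)] ++ Rgo k p q false ((j', bb) :: t) := by
              rw [Rgo_cons, hc, Blk_s k p q hj]
              simp
            refine ⟨?_, ?_, ?_⟩
            · rw [hR]
              refine List.isChain_append.mpr ⟨List.isChain_singleton _, C2, ?_⟩
              intro x hx y hy
              simp at hx
              subst hx
              rw [Option.mem_def, H2] at hy
              exact hjun y hy
            · rw [hR]
              simp only [List.cons_append, List.head?_cons, List.singleton_append]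
              rw [expH_false_cons, if_neg hj, if_neg ?c2, if_neg ?c3]
              case c2 =>
                rintro ⟨u1, u2, u3⟩
                exact hcc (Or.inl ⟨Prod.ext_iff.mpr ⟨u1, u2⟩, Option.some.inj u3⟩)
              case c3 =>
                rintro ⟨u1, u2, u3⟩
                exact hcc (Or.inr ⟨Prod.ext_iff.mpr ⟨u1, u2⟩, Option.some.inj u3⟩)
            · rw [hR, ← FreeGroup.mul_mk, M2', FreeGroup.mul_mk, if_neg Bool.false_ne_true]
              simp [List.flatMap_cons, Blk_s k p q hj]
      · -- lt = true, j ≠ k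
        obtain ⟨j0, b0, t0, heq, hmem⟩ := hvalid rfl
        injection heq with h1 h2
        injection h1 with h1a h1b
        subst h1a
        subst h1b
        subst h2
        rcases hmem with h | h
        · exact absurd h hj
        · have hnc : ∀ x, canc k p q (j, b) x = false := by
            intro x
            rw [Bool.eq_false_iff]
            intro hcx
            rcases (canc_s_iff _ _ _ hj _ _).mp hcx with ⟨h1, -⟩ | ⟨h1, -⟩ <;>
              rcases h with h2 | h2 <;> rw [h2] at h1 <;>
              simp [Prod.mk.injEq] at h1 <;> omega
          have hc : cancO k p q (j, b) rest = false := by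
            cases rest with
            | nil => rfl
            | cons x' t' => rw [cancO_cons]; exact hnc x'
          have hR : Rgo k p q true ((j, b) :: rest) = Rgo k p q false rest := by
            rw [Rgo_cons, hc, Blk_s k p q hj]
            simp
          obtain ⟨C2, H2, M2⟩ := ih hch.tail false (fun hf => absurd hf Bool.false_ne_true)
          have M2' : FreeGroup.mk (Rgo k p q false rest) =
              FreeGroup.mk (rest.flatMap (Blk k p q)) := by simpa using M2
          refine ⟨by rw [hR]; exact C2, ?_, ?_⟩
          · rw [hR, H2, expH_true_cons, if_neg hj]
          · rw [hR, M2', if_pos rfl]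
            simp [List.flatMap_cons, Blk_s k p q hj]

theorem lift_mk_bind (w : List (ℕ × Bool)) :
    FreeGroup.lift (fun j => if j = k then
        FreeGroup.of p * (FreeGroup.of k)⁻¹ * FreeGroup.of q else FreeGroup.of j)
      (FreeGroup.mk w) = FreeGroup.mk (w.flatMap (Blk k p q)) := by
  induction w with
  | nil =>
    rw [show FreeGroup.mk ([] : List (ℕ × Bool)) = 1 from FreeGroup.one_eq_mk.symm,
      _root_.map_one, List.flatMap_nil]
    exact FreeGroup.one_eq_mk
  | cons a t ih =>
    obtain ⟨j, b⟩ := a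
    have h1 : FreeGroup.mk ((j, b) :: t) = FreeGroup.mk [(j, b)] * FreeGroup.mk t := by
      rw [FreeGroup.mul_mk]; rfl
    have h2 : FreeGroup.mk (((j, b) :: t).flatMap (Blk k p q)) =
        FreeGroup.mk (Blk k p q (j, b)) * FreeGroup.mk (t.flatMap (Blk k p q)) := by
      rw [FreeGroup.mul_mk, List.flatMap_cons]
    rw [h1, _root_.map_mul, ih, h2]
    congr 1
    by_cases hj : j = k
    · cases b
      · rw [mk_single_false, _root_.map_inv, FreeGroup.lift_apply_of, if_pos hj]
        simp only [Blk, if_pos hj, Bool.false_eq_true, if_false]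
        rw [show [(q, false), (k, true), (p, false)] = [(q, false)] ++ [(k, true)] ++ [(p, false)] from rfl,
          ← FreeGroup.mul_mk, ← FreeGroup.mul_mk, mk_single_false, mk_single_true, mk_single_false]
        group
      · rw [mk_single_true, FreeGroup.lift_apply_of, if_pos hj]
        simp only [Blk, if_pos hj, if_true]
        rw [show [(p, true), (k, false), (q, true)] = [(p, true)] ++ [(k, false)] ++ [(q, true)] from rfl,
          ← FreeGroup.mul_mk, ← FreeGroup.mul_mk, mk_single_true, mk_single_false, mk_single_true]
    · cases b
      · rw [mk_single_false, _root_.map_inv, FreeGroup.lift_apply_of, if_neg hj]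
        simp only [Blk, if_neg hj]
        rw [mk_single_false]
      · rw [mk_single_true, FreeGroup.lift_apply_of, if_neg hj]
        simp only [Blk, if_neg hj]
        rfl

theorem head_spec (hp : p ≠ k) (hq : q ≠ k) (hpq : p ≠ q)
    (f : FreeGroup ℕ) (m : ℕ) (hf : f.toWord.head? = some (m, false))
    (σ : FreeGroup ℕ →* FreeGroup ℕ)
    (hσ : σ = FreeGroup.lift (fun j => if j = k then
      FreeGroup.of p * (FreeGroup.of k)⁻¹ * FreeGroup.of q else FreeGroup.of j)) :
    ((σ f).toWord.head? = some (q, false) ∧ m = k) ∨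
    ((σ f).toWord.head? = some (k, false) ∧ m = p) ∨
    (σ f).toWord.head? = some (m, false) := by
  have hred : FreeGroup.reduce f.toWord = f.toWord := by
    conv_rhs => rw [← FreeGroup.mk_toWord (x := f)]
    rw [FreeGroup.toWord_mk]
  have hchain : List.Chain' ncond f.toWord := by
    rw [← hred]; exact chain'_reduce _
  obtain ⟨ch, hhead, hmk⟩ := main k p q hp hq hpq f.toWord hchain false (by simp [valid])
  rw [if_neg Bool.false_ne_true] at hmk
  have hσf : σ f = FreeGroup.mk (Rgo k p q false f.toWord) := by
    conv_lhs => rw [← FreeGroup.mk_toWord (x := f)]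
    rw [hσ, lift_mk_bind, ← hmk]
  have htw : (σ f).toWord = Rgo k p q false f.toWord := by
    rw [hσf, FreeGroup.toWord_mk, reduce_eq_self _ ch]
  rw [htw, hhead]
  obtain ⟨t, hw⟩ : ∃ t, f.toWord = (m, false) :: t := by
    cases hwt : f.toWord with
    | nil => rw [hwt] at hf; simp at hf
    | cons a t => rw [hwt] at hf; simp at hf; exact ⟨t, by rw [hf]⟩
  rw [hw]
  by_cases hmk' : m = k
  · left
    constructor
    · simp [expH, hmk']
    · exact hmk'
  · by_cases hmp : m = p ∧ t.head? = some (k, true)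
    · right; left
      refine ⟨?_, hmp.1⟩
      simp only [expH]
      rw [if_neg hmk', if_pos ⟨hmp.1, trivial, hmp.2⟩]
    · right; right
      simp only [expH]
      rw [if_neg hmk', if_neg (fun h => hmp ⟨h.1, h.2.2⟩),
        if_neg (fun h => Bool.false_ne_true h.2.1)]

end TauAux

/-- The automorphism `τ_i` (as an endomorphism of the free group `F_X` on
`x_0, x_1, …`, given by its values on the generators, for `i ≥ 1`):
`x_i ↦ x_{i+1} · x_i⁻¹ · x_{i-1}` and `x_j ↦ x_j` for `j ≠ i`. -/
def tauHom (i : ℕ) : FreeGroup ℕ →* FreeGroup ℕ :=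
  FreeGroup.lift fun j =>
    if j = i then FreeGroup.of (i + 1) * (FreeGroup.of i)⁻¹ * FreeGroup.of (i - 1)
    else FreeGroup.of j

/-- The inverse automorphism `τ_i⁻¹`: `x_i ↦ x_{i-1} · x_i⁻¹ · x_{i+1}` and
`x_j ↦ x_j` for `j ≠ i`. -/
def tauInvHom (i : ℕ) : FreeGroup ℕ →* FreeGroup ℕ :=
  FreeGroup.lift fun j =>
    if j = i then FreeGroup.of (i - 1) * (FreeGroup.of i)⁻¹ * FreeGroup.of (i + 1)
    else FreeGroup.of j

/-- If the reduced word of `f` begins with `x_m⁻¹` and `σ` is `τ_k` or `τ_k⁻¹` for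
some `k ≥ 1`, then the reduced word of `σ(f)` begins with `x_m⁻¹`, `x_{m+1}⁻¹`, or
`x_{m-1}⁻¹`. -/
theorem tau_leading_inverse_letter
    (f : FreeGroup ℕ) (m : ℕ) (hf : f.toWord.head? = some (m, false))
    (k : ℕ) (hk : 1 ≤ k) (σ : FreeGroup ℕ →* FreeGroup ℕ)
    (hσ : σ = tauHom k ∨ σ = tauInvHom k) :
    (σ f).toWord.head? = some (m, false) ∨
    (σ f).toWord.head? = some (m + 1, false) ∨
    (1 ≤ m ∧ (σ f).toWord.head? = some (m - 1, false)) := by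
  rcases hσ with hσ | hσ
  · have h := TauAux.head_spec k (k + 1) (k - 1) (by omega) (by omega) (by omega) f m hf σ hσ
    rcases h with ⟨h1, h2⟩ | ⟨h1, h2⟩ | h1
    · right; right
      refine ⟨by omega, ?_⟩
      rw [h1]; congr 2; omega
    · right; right
      refine ⟨by omega, ?_⟩
      rw [h1]; congr 2; omega
    · left; exact h1
  · have h := TauAux.head_spec k (k - 1) (k + 1) (by omega) (by omega) (by omega) f m hf σ hσ
    rcases h with ⟨h1, h2⟩ | ⟨h1, h2⟩ | h1
    · right; left
      rw [h1]; congr 2; omega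
    · right; left
      rw [h1]; congr 2; omega
    · left; exact h1
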